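/- For every natural number n, the number of words of length n+1 over {−1, 0, 0̄, 1} (with 0̄ valued 0) that sum to 0, have all partial sums nonnegative, and such that the partial sum before every occurrence of 0̄ is strictly positive, equals the number of words of length n over the same alphabet that sum to 0 and have all partial sums nonnegative. -/

import Mathlib

inductive Letter : Type
  | up | zero | zbar | down
deriving DecidableEq

def val : Letter → ℤ
  | .up => 1
  | .zero => 0
  | .zbar => 0
  | .down => -1

instance : Finite Letter := by
  refine Finite.of_injective (fun a => (match a with
    | .up => 0 | .zero => 1 | .zbar => 2 | .down => 3 : Fin 4)) ?_
  intro a b hab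
  cases a <;> cases b <;> simp_all

/-- Paths of length `k` starting at height `h`, staying nonnegative, ending at `0`. -/
def Mset (k : ℕ) (h : ℤ) : Set (List Letter) :=
  {w | w.length = k ∧ h + (w.map val).sum = 0 ∧
    ∀ p, p <+: w → 0 ≤ h + (p.map val).sum}

/-- As `Mset`, but `zbar` only at strictly positive height. -/
def Aset (k : ℕ) (h : ℤ) : Set (List Letter) :=
  {w | w ∈ Mset k h ∧ ∀ p t, w = p ++ Letter.zbar :: t → 0 < h + (p.map val).sum}

lemma Mset_finite (k : ℕ) (h : ℤ) : (Mset k h).Finite :=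
  (List.finite_length_eq Letter k).subset fun _ hw => hw.1

lemma Aset_finite (k : ℕ) (h : ℤ) : (Aset k h).Finite :=
  (Mset_finite k h).subset fun _ hw => hw.1

lemma Mset_neg {k : ℕ} {h : ℤ} (hh : h < 0) : Mset k h = ∅ := by
  ext w
  simp only [Mset, Set.mem_setOf_eq, Set.mem_empty_iff_false, iff_false]
  rintro ⟨-, -, hp⟩
  have := hp [] (List.nil_prefix)
  simp at this
  omega

lemma Aset_neg {k : ℕ} {h : ℤ} (hh : h < 0) : Aset k h = ∅ := by
  have := Mset_neg (k := k) hh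
  ext w
  simp only [Aset, Set.mem_setOf_eq, Set.mem_empty_iff_false, iff_false]
  rintro ⟨h1, -⟩
  rw [this] at h1
  exact h1

lemma Mset_zero (h : ℤ) : Mset 0 h = if h = 0 then {([] : List Letter)} else ∅ := by
  ext w
  simp only [Mset, Set.mem_setOf_eq, List.length_eq_zero_iff]
  constructor
  · rintro ⟨rfl, h2, -⟩
    simp at h2
    simp [h2]
  · intro hw
    split at hw
    · simp only [Set.mem_singleton_iff] at hw
      subst hw
      refine ⟨rfl, by simpa using ‹h = 0›, ?_⟩
      intro p hp
      rw [List.prefix_nil] at hp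
      subst hp
      simp
      omega
    · simp at hw

lemma Aset_zero (h : ℤ) : Aset 0 h = if h = 0 then {([] : List Letter)} else ∅ := by
  ext w
  simp only [Aset, Set.mem_setOf_eq]
  constructor
  · rintro ⟨h1, -⟩
    rw [Mset_zero] at h1
    split at h1 <;> simp_all
  · intro hw
    split at hw
    · simp only [Set.mem_singleton_iff] at hw
      subst hw
      constructor
      · rw [Mset_zero]; simp [‹h = 0›]
      · intro p t hpt
        simp at hpt
    · simp at hw

lemma mem_Mset_cons {a : Letter} {t : List Letter} {k : ℕ} {h : ℤ} :
    (a :: t) ∈ Mset (k + 1) h ↔ 0 ≤ h ∧ t ∈ Mset k (h + val a) := by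
  constructor
  · rintro ⟨hlen, hsum, hpre⟩
    have h0 : 0 ≤ h := by simpa using hpre [] List.nil_prefix
    refine ⟨h0, by simpa using hlen, by simpa [add_assoc] using hsum, ?_⟩
    intro p hp
    have := hpre (a :: p) (by rw [List.cons_prefix_cons]; exact ⟨rfl, hp⟩)
    simpa [add_assoc] using this
  · rintro ⟨h0, hlen, hsum, hpre⟩
    refine ⟨by simpa using hlen, by simpa [add_assoc] using hsum, ?_⟩
    intro p hp
    match p with
    | [] => simpa using h0
    | b :: q =>
      rw [List.cons_prefix_cons] at hp
      obtain ⟨rfl, hq⟩ := hp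
      simpa [add_assoc] using hpre q hq

lemma mem_Aset_cons {a : Letter} {t : List Letter} {k : ℕ} {h : ℤ} :
    (a :: t) ∈ Aset (k + 1) h ↔
      0 ≤ h ∧ (a = Letter.zbar → 0 < h) ∧ t ∈ Aset k (h + val a) := by
  constructor
  · rintro ⟨hM, hz⟩
    rw [mem_Mset_cons] at hM
    refine ⟨hM.1, ?_, hM.2, ?_⟩
    · rintro rfl
      simpa using hz [] t rfl
    · intro p s hps
      have := hz (a :: p) s (by rw [hps]; rfl)
      simpa [add_assoc] using this
  · rintro ⟨h0, hzb, hA, hz⟩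
    refine ⟨mem_Mset_cons.mpr ⟨h0, hA⟩, ?_⟩
    intro p s hps
    match p with
    | [] =>
      simp only [List.nil_append, List.cons.injEq] at hps
      simpa using hzb hps.1
    | b :: q =>
      simp only [List.cons_append, List.cons.injEq] at hps
      obtain ⟨rfl, hq⟩ := hps
      simpa [add_assoc] using hz q s hq

lemma ncard_cons_image (a : Letter) (s : Set (List Letter)) :
    (List.cons a '' s).ncard = s.ncard :=
  Set.ncard_image_of_injective s List.cons_injective

lemma disj_cons_image {a b : Letter} (hab : a ≠ b) (s t : Set (List Letter)) :
    Disjoint (List.cons a '' s) (List.cons b '' t) := by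
  rw [Set.disjoint_left]
  rintro w ⟨u, -, rfl⟩ ⟨v, -, hv⟩
  simp only [List.cons.injEq] at hv
  exact hab hv.1.symm

lemma Mset_succ (k : ℕ) (h : ℤ) (hh : 0 ≤ h) :
    Mset (k + 1) h = (List.cons .up '' Mset k (h + 1)) ∪
      ((List.cons .zero '' Mset k h) ∪
        ((List.cons .zbar '' Mset k h) ∪ (List.cons .down '' Mset k (h - 1)))) := by
  ext w
  match w with
  | [] =>
    constructor
    · rintro ⟨hlen, -, -⟩; simp at hlen
    · rintro (⟨u, -, hu⟩ | ⟨u, -, hu⟩ | ⟨u, -, hu⟩ | ⟨u, -, hu⟩) <;> simp at hu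
  | a :: t =>
    rw [mem_Mset_cons]
    cases a <;>
      simp [val, hh, List.cons_injective.mem_set_image, sub_eq_add_neg]

lemma Aset_succ (k : ℕ) (h : ℤ) (hh : 0 ≤ h) :
    Aset (k + 1) h = (List.cons .up '' Aset k (h + 1)) ∪
      ((List.cons .zero '' Aset k h) ∪
        (((if 0 < h then List.cons .zbar '' Aset k h else ∅)) ∪
          (List.cons .down '' Aset k (h - 1)))) := by
  ext w
  match w with
  | [] =>
    constructor
    · rintro ⟨⟨hlen, -, -⟩, -⟩; simp at hlen
    · rintro (⟨u, -, hu⟩ | ⟨u, -, hu⟩ | hu | ⟨u, -, hu⟩)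
      · simp at hu
      · simp at hu
      · split at hu
        · obtain ⟨u, -, hu⟩ := hu; simp at hu
        · simp at hu
      · simp at hu
  | a :: t =>
    rw [mem_Aset_cons]
    cases a <;> by_cases hp : 0 < h <;>
      simp [val, hh, hp, List.cons_injective.mem_set_image, sub_eq_add_neg]

lemma ncard_union4 (s1 s2 s3 s4 : Set (List Letter))
    (hf1 : s1.Finite) (hf2 : s2.Finite) (hf3 : s3.Finite) (hf4 : s4.Finite)
    (d12 : Disjoint s1 (s2 ∪ (s3 ∪ s4))) (d23 : Disjoint s2 (s3 ∪ s4))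
    (d34 : Disjoint s3 s4) :
    (s1 ∪ (s2 ∪ (s3 ∪ s4))).ncard = s1.ncard + s2.ncard + s3.ncard + s4.ncard := by
  rw [Set.ncard_union_eq d12 hf1 (hf2.union (hf3.union hf4)),
    Set.ncard_union_eq d23 hf2 (hf3.union hf4),
    Set.ncard_union_eq d34 hf3 hf4]
  ring

lemma M_rec (k : ℕ) (h : ℤ) (hh : 0 ≤ h) :
    (Mset (k + 1) h).ncard = (Mset k (h + 1)).ncard + (Mset k h).ncard +
      (Mset k h).ncard + (Mset k (h - 1)).ncard := by
  rw [Mset_succ k h hh,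
    ncard_union4 _ _ _ _ ((Mset_finite _ _).image _) ((Mset_finite _ _).image _)
      ((Mset_finite _ _).image _) ((Mset_finite _ _).image _)
      (Disjoint.union_right (disj_cons_image (by simp) _ _)
        (Disjoint.union_right (disj_cons_image (by simp) _ _)
          (disj_cons_image (by simp) _ _)))
      (Disjoint.union_right (disj_cons_image (by simp) _ _)
        (disj_cons_image (by simp) _ _))
      (disj_cons_image (by simp) _ _),
    ncard_cons_image, ncard_cons_image, ncard_cons_image, ncard_cons_image]

lemma A_rec (k : ℕ) (h : ℤ) (hh : 0 ≤ h) :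
    (Aset (k + 1) h).ncard = (Aset k (h + 1)).ncard + (Aset k h).ncard +
      (if 0 < h then (Aset k h).ncard else 0) + (Aset k (h - 1)).ncard := by
  have hz : (if 0 < h then List.cons Letter.zbar '' Aset k h else ∅).ncard =
      if 0 < h then (Aset k h).ncard else 0 := by
    split <;> simp [ncard_cons_image]
  have hzf : (if 0 < h then List.cons Letter.zbar '' Aset k h else ∅).Finite := by
    split
    · exact (Aset_finite _ _).image _
    · exact Set.finite_empty
  have hzd : ∀ a : Letter, a ≠ Letter.zbar → ∀ s : Set (List Letter),
      Disjoint (List.cons a '' s)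
        (if 0 < h then List.cons Letter.zbar '' Aset k h else ∅) := by
    intro a ha s
    split
    · exact disj_cons_image ha _ _
    · exact disjoint_bot_right
  have hzd' : Disjoint (if 0 < h then List.cons Letter.zbar '' Aset k h else ∅)
      (List.cons Letter.down '' Aset k (h - 1)) := by
    split
    · exact disj_cons_image (by simp) _ _
    · exact disjoint_bot_left
  rw [Aset_succ k h hh,
    ncard_union4 _ _ _ _ ((Aset_finite _ _).image _) ((Aset_finite _ _).image _)
      hzf ((Aset_finite _ _).image _)
      (Disjoint.union_right (disj_cons_image (by simp) _ _)
        (Disjoint.union_right (hzd _ (by simp) _) (disj_cons_image (by simp) _ _)))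
      (Disjoint.union_right (hzd _ (by simp) _) (disj_cons_image (by simp) _ _))
      hzd',
    ncard_cons_image, ncard_cons_image, ncard_cons_image, hz]

lemma ncard_Mset_zero (h : ℤ) : (Mset 0 h).ncard = if h = 0 then 1 else 0 := by
  rw [Mset_zero]; split <;> simp

lemma ncard_Aset_zero (h : ℤ) : (Aset 0 h).ncard = if h = 0 then 1 else 0 := by
  rw [Aset_zero]; split <;> simp

lemma key (k : ℕ) : ∀ h : ℤ, 0 ≤ h →
    (Aset (k + 1) h).ncard =
      (if 0 < h then (Mset k (h - 1)).ncard else 0) + (Mset k h).ncard := by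
  induction k with
  | zero =>
    intro h hh
    rw [A_rec 0 h hh, ncard_Aset_zero, ncard_Aset_zero, ncard_Aset_zero,
      ncard_Mset_zero]
    rcases eq_or_lt_of_le hh with hh0 | hh1
    · simp [← hh0, ncard_Mset_zero]
    · rcases eq_or_lt_of_le (by omega : (1 : ℤ) ≤ h) with hh1' | hh2
      · rw [ncard_Mset_zero]
        simp only [← hh1']
        norm_num
      · rw [ncard_Mset_zero]
        have n1 : ¬ (h + 1 = 0) := by omega
        have n2 : ¬ (h = 0) := by omega
        have n3 : ¬ (h - 1 = 0) := by omega
        simp [n1, n2, n3, hh1]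
  | succ k ih =>
    intro h hh
    rw [A_rec (k+1) h hh, ih (h+1) (by omega), ih h hh]
    rcases eq_or_lt_of_le hh with hh0 | hh1
    · subst hh0
      rw [M_rec k 0 le_rfl]
      have e1 : (Aset (k+1) (-1:ℤ)).ncard = 0 := by
        rw [Aset_neg (by norm_num)]; simp
      have e2 : (Mset k (-1:ℤ)).ncard = 0 := by
        rw [Mset_neg (by norm_num)]; simp
      norm_num [e1, e2]
      omega
    · rw [ih (h-1) (by omega), M_rec k h (by omega), M_rec k (h-1) (by omega),
        (show h - 1 + 1 = h by ring), (show h + 1 - 1 = h by ring),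
        if_pos (show (0:ℤ) < h + 1 by omega)]
      rcases eq_or_lt_of_le (by omega : (1:ℤ) ≤ h) with h1 | h2
      · have e2 : (Mset k (h-1-1)).ncard = 0 := by
          rw [Mset_neg (by omega)]; simp
        simp only [if_pos hh1, if_neg (show ¬(0:ℤ) < h-1 by omega), e2]
        omega
      · simp only [if_pos hh1, if_pos (show (0:ℤ) < h-1 by omega)]
        omega

theorem card_Gset'_eq_card_Gset (n : ℕ) :
    {w : List Letter | w.length = n + 1 ∧ (w.map val).sum = 0 ∧
      (∀ p, p <+: w → 0 ≤ (p.map val).sum) ∧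
      ∀ p t, w = p ++ Letter.zbar :: t → 0 < (p.map val).sum}.ncard =
    {w : List Letter | w.length = n ∧ (w.map val).sum = 0 ∧
      ∀ p, p <+: w → 0 ≤ (p.map val).sum}.ncard := by
  have h1 : {w : List Letter | w.length = n + 1 ∧ (w.map val).sum = 0 ∧
      (∀ p, p <+: w → 0 ≤ (p.map val).sum) ∧
      ∀ p t, w = p ++ Letter.zbar :: t → 0 < (p.map val).sum} = Aset (n + 1) 0 := by
    ext w
    simp [Aset, Mset, and_assoc]
  have h2 : {w : List Letter | w.length = n ∧ (w.map val).sum = 0 ∧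
      ∀ p, p <+: w → 0 ≤ (p.map val).sum} = Mset n 0 := by
    ext w
    simp [Mset]
  rw [h1, h2, key n 0 le_rfl]
  simp
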